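/- Fix p > 0 and a player i ∈ {0,1}. Let E be a p-evident C-indicating event, let ω be a state with P_i(C | ω) ≥ p, and let S be a subset of Π_i(ω) such that P_i(S | ω) ≥ p and P_{1−i}(E | ω') ≥ p for every ω' ∈ S. Then S ∪ E is a p-evident C-indicating event. -/
import Mathlib


open Finset

variable {Ω : Type*}

/-- The conditional probability `P_i(E | ω) = μ(E ∩ Π_i(ω)) / μ(Π_i(ω))`,
where `part i ω` is the cell of player `i`'s information partition containing `ω`. -/
noncomputable def condP [Fintype Ω] [DecidableEq Ω] (μ : Ω → ℝ)
    (part : Fin 2 → Ω → Finset Ω) (i : Fin 2) (E : Finset Ω) (ω : Ω) : ℝ :=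
  (∑ x ∈ E ∩ part i ω, μ x) / (∑ x ∈ part i ω, μ x)

/-- `E` is `p`-evident: every player `p`-believes `E` at every state of `E`. -/
def pEvident [Fintype Ω] [DecidableEq Ω] (μ : Ω → ℝ)
    (part : Fin 2 → Ω → Finset Ω) (p : ℝ) (E : Finset Ω) : Prop :=
  ∀ i : Fin 2, ∀ ω ∈ E, p ≤ condP μ part i E ω

/-- `E` is a `p`-evident `C`-indicating event. -/
def pEvidentInd [Fintype Ω] [DecidableEq Ω] (μ : Ω → ℝ)
    (part : Fin 2 → Ω → Finset Ω) (p : ℝ) (C E : Finset Ω) : Prop :=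
  pEvident μ part p E ∧ ∀ i : Fin 2, ∀ ω ∈ E, p ≤ condP μ part i C ω

/-- `E` is the largest `p`-evident `C`-indicating event. -/
def isLargestInd [Fintype Ω] [DecidableEq Ω] (μ : Ω → ℝ)
    (part : Fin 2 → Ω → Finset Ω) (p : ℝ) (C E : Finset Ω) : Prop :=
  pEvidentInd μ part p C E ∧ ∀ F : Finset Ω, pEvidentInd μ part p C F → F ⊆ E

/-- `p` is the `C`-evidence level of `E`: the maximum `q` for which `E` is a
`q`-evident `C`-indicating event. -/
def isEvidenceLevel [Fintype Ω] [DecidableEq Ω] (μ : Ω → ℝ)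
    (part : Fin 2 → Ω → Finset Ω) (C E : Finset Ω) (p : ℝ) : Prop :=
  IsGreatest {q : ℝ | pEvidentInd μ part q C E} p

/-- `G` is the maximally evident `C`-indicating superset of `F`. -/
def isMaxEvidentSup [Fintype Ω] [DecidableEq Ω] (μ : Ω → ℝ)
    (part : Fin 2 → Ω → Finset Ω) (C F G : Finset Ω) : Prop :=
  F ⊆ G ∧ ∃ p : ℝ, isEvidenceLevel μ part C G p ∧ isLargestInd μ part p C G ∧
    ∀ H : Finset Ω, F ⊆ H → ∀ q : ℝ, isEvidenceLevel μ part C H q → q ≤ p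

/-- `E` is a maximally evident `C`-indicating event: it is the maximally evident
`C`-indicating superset of some nonempty event. -/
def isMaxEvident [Fintype Ω] [DecidableEq Ω] (μ : Ω → ℝ)
    (part : Fin 2 → Ω → Finset Ω) (C E : Finset Ω) : Prop :=
  ∃ F : Finset Ω, F.Nonempty ∧ isMaxEvidentSup μ part C F E

/-- `E` is a super-`p`-evident `C`-indicating event. -/
def superEvidentInd [Fintype Ω] [DecidableEq Ω] (μ : Ω → ℝ)
    (part : Fin 2 → Ω → Finset Ω) (p : ℝ) (C E : Finset Ω) : Prop :=
  ∀ i : Fin 2, ∀ ω ∈ E, p < condP μ part i E ω ∧ p < condP μ part i C ω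

/-- `E` is the largest super-evident `C`-indicating subset of `F`. -/
def isLargestSuperSub [Fintype Ω] [DecidableEq Ω] (μ : Ω → ℝ)
    (part : Fin 2 → Ω → Finset Ω) (C F E : Finset Ω) : Prop :=
  E ⊆ F ∧ ∃ p : ℝ, isEvidenceLevel μ part C F p ∧ superEvidentInd μ part p C E ∧
    ∀ G : Finset Ω, G ⊆ F → superEvidentInd μ part p C G → G ⊆ E

lemma condP_denom_pos [Fintype Ω] [DecidableEq Ω] (μ : Ω → ℝ)
    (part : Fin 2 → Ω → Finset Ω) (hμpos : ∀ ω : Ω, 0 < μ ω)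
    (hmem : ∀ (i : Fin 2) (ω : Ω), ω ∈ part i ω) (j : Fin 2) (ω : Ω) :
    0 < ∑ x ∈ part j ω, μ x :=
  Finset.sum_pos (fun x _ => hμpos x) ⟨ω, hmem j ω⟩

lemma condP_mono [Fintype Ω] [DecidableEq Ω] (μ : Ω → ℝ)
    (part : Fin 2 → Ω → Finset Ω) (hμpos : ∀ ω : Ω, 0 < μ ω)
    (hmem : ∀ (i : Fin 2) (ω : Ω), ω ∈ part i ω)
    (j : Fin 2) {A B : Finset Ω} (hAB : A ⊆ B) (ω : Ω) :
    condP μ part j A ω ≤ condP μ part j B ω := by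
  have hd := condP_denom_pos μ part hμpos hmem j ω
  unfold condP
  gcongr
  exact fun x _ _ => (hμpos x).le

lemma condP_inter_nonempty [Fintype Ω] [DecidableEq Ω] (μ : Ω → ℝ)
    (part : Fin 2 → Ω → Finset Ω) (hμpos : ∀ ω : Ω, 0 < μ ω)
    {p : ℝ} (hp : 0 < p) (j : Fin 2) (A : Finset Ω) (ω : Ω)
    (h : p ≤ condP μ part j A ω) : (A ∩ part j ω).Nonempty := by
  by_contra hne
  rw [Finset.not_nonempty_iff_eq_empty] at hne
  rw [condP, hne, Finset.sum_empty, zero_div] at h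
  linarith

/-- If `E` is a `p`-evident `C`-indicating event, player `i` `p`-believes `C` at `ω`, and
`S` is a subset of the cell of `ω` such that player `i` `p`-believes `S` at `ω` and player
`1 - i` `p`-believes `E` at every state of `S`, then `S ∪ E` is a `p`-evident
`C`-indicating event. -/
theorem union_pEvidentInd_of_pBelief [Fintype Ω] [DecidableEq Ω] [Nonempty Ω]
    (μ : Ω → ℝ) (part : Fin 2 → Ω → Finset Ω)
    (hμpos : ∀ ω : Ω, 0 < μ ω) (hμsum : ∑ ω : Ω, μ ω = 1)
    (hmem : ∀ (i : Fin 2) (ω : Ω), ω ∈ part i ω)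
    (hcell : ∀ (i : Fin 2) (ω ω' : Ω), ω' ∈ part i ω → part i ω' = part i ω)
    (p : ℝ) (hp : 0 < p) (i : Fin 2) (C E S : Finset Ω) (ω : Ω)
    (hE : pEvidentInd μ part p C E)
    (hC : p ≤ condP μ part i C ω)
    (hSsub : S ⊆ part i ω)
    (hSbel : p ≤ condP μ part i S ω)
    (hSE : ∀ ω' ∈ S, p ≤ condP μ part (1 - i) E ω') :
    pEvidentInd μ part p C (S ∪ E) := by
  have hmono := condP_mono μ part hμpos hmem
  have hji : ∀ j : Fin 2, j = i ∨ j = 1 - i := by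
    intro j; fin_cases i <;> fin_cases j <;> simp <;> decide
  constructor
  · intro j ω' hω'
    rcases Finset.mem_union.mp hω' with hS | hEω
    · rcases hji j with rfl | rfl
      · have hcc : part j ω' = part j ω := hcell j ω ω' (hSsub hS)
        calc p ≤ condP μ part j S ω := hSbel
          _ = condP μ part j S ω' := by unfold condP; rw [hcc]
          _ ≤ condP μ part j (S ∪ E) ω' := hmono j Finset.subset_union_left ω'
      · exact le_trans (hSE ω' hS) (hmono _ Finset.subset_union_right ω')
    · rcases hji j with rfl | rfl <;>
        exact le_trans (hE.1 _ ω' hEω) (hmono _ Finset.subset_union_right ω')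
  · intro j ω' hω'
    rcases Finset.mem_union.mp hω' with hS | hEω
    · rcases hji j with rfl | rfl
      · have hcc : part j ω' = part j ω := hcell j ω ω' (hSsub hS)
        calc p ≤ condP μ part j C ω := hC
          _ = condP μ part j C ω' := by unfold condP; rw [hcc]
      · obtain ⟨ω'', hω''⟩ :=
          condP_inter_nonempty μ part hμpos hp (1 - i) E ω' (hSE ω' hS)
        rw [Finset.mem_inter] at hω''
        have hcc : part (1 - i) ω'' = part (1 - i) ω' := hcell (1 - i) ω' ω'' hω''.2
        calc p ≤ condP μ part (1 - i) C ω'' := hE.2 (1 - i) ω'' hω''.1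
          _ = condP μ part (1 - i) C ω' := by unfold condP; rw [hcc]
    · exact hE.2 _ ω' hEω
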